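/- Let n, r ≥ 1, let λ, μ, ν, ρ : Fin n → ℤ satisfy λ + μ = ν + ρ (pointwise), and suppose ν and ρ both lie in the minimal alcoved parallelepiped P_{λ,μ}, i.e. for all indices i, j the differences ν i - ν j and ρ i - ρ j each lie weakly between λ i - λ j and μ i - μ j. Let l, m : Fin r → Fin n be two maps, and let G ∈ ℤ. Suppose that for every function ε : Fin r → Bool, letting (l'_p, m'_p) = (l p, m p) if ε p = false and (l'_p, m'_p) = (m p, l p) if ε p = true, the inequality Σ_{p=1}^{r} (λ (l'_p) + μ (m'_p)) ≥ G holds. Then Σ_{p=1}^{r} (ν (l p) + ρ (m p)) ≥ G. (This is the arithmetic content of Lemma 2.4 of the paper: if the Horn–Klyachko inequality with right-hand side G = Σ_{k ∈ K} γ_k holds for λ, μ for all 2^r triples (I', J', K) obtained by swapping entries of the paired enumerations of I and J, then the Horn–Klyachko inequality for the triple (I, J, K) holds for ν, ρ.) -/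

import Mathlib

theorem stmt_4 (n r : ℕ) (hn : 1 ≤ n) (hr : 1 ≤ r) (lam mu nu rho : Fin n → ℤ)
    (hsum : lam + mu = nu + rho)
    (hnu : ∀ i j : Fin n, min (lam i - lam j) (mu i - mu j) ≤ nu i - nu j ∧
      nu i - nu j ≤ max (lam i - lam j) (mu i - mu j))
    (hrho : ∀ i j : Fin n, min (lam i - lam j) (mu i - mu j) ≤ rho i - rho j ∧
      rho i - rho j ≤ max (lam i - lam j) (mu i - mu j))
    (l m : Fin r → Fin n) (G : ℤ)
    (hHK : ∀ ε : Fin r → Bool,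
      G ≤ ∑ p : Fin r,
        (lam (if ε p then m p else l p) + mu (if ε p then l p else m p))) :
    G ≤ ∑ p : Fin r, (nu (l p) + rho (m p)) := by
  set ε : Fin r → Bool := fun p => decide (nu (l p) + rho (m p) < lam (l p) + mu (m p)) with hε
  refine le_trans (hHK ε) (Finset.sum_le_sum ?_)
  intro p _
  have h1 := congrFun hsum (l p)
  have h2 := congrFun hsum (m p)
  simp only [Pi.add_apply] at h1 h2
  have h3 := hnu (l p) (m p)
  by_cases hp : nu (l p) + rho (m p) < lam (l p) + mu (m p)
  · simp only [hε, hp]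
    simp only [decide_true, if_true]
    omega
  · simp only [hε, hp]
    simp only [decide_false, Bool.false_eq_true, if_false]
    omega
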